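/- Let A ∈ ℝ^{m×n}, b ∈ ℝ^m, W ∈ ℝ^{n×n} symmetric positive definite, and S ∈ ℝ^{m×k} such that Aᵀ S has full column rank k. Then the matrix Sᵀ A W Aᵀ S is invertible, and p = W Aᵀ S (Sᵀ A W Aᵀ S)⁻¹ Sᵀ r satisfies the sketched equation Sᵀ A p = Sᵀ r for any r ∈ ℝ^m. -/

import Mathlib

open Matrix

lemma mulVec_inj_of_rank {n k : ℕ} (M : Matrix (Fin n) (Fin k) ℝ)
    (hrank : M.rank = k) : Function.Injective M.mulVec := by
  rw [show M.mulVec = M.mulVecLin from rfl, ← LinearMap.ker_eq_bot]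
  have h := LinearMap.finrank_range_add_finrank_ker M.mulVecLin
  rw [Matrix.rank] at hrank
  rw [hrank] at h
  simp only [Module.finrank_pi, Fintype.card_fin] at h
  have hker : Module.finrank ℝ (LinearMap.ker M.mulVecLin) = 0 := by omega
  exact Submodule.finrank_eq_zero.mp hker

lemma posDef_conj {n k : ℕ} (W : Matrix (Fin n) (Fin n) ℝ) (hW : W.PosDef)
    (M : Matrix (Fin n) (Fin k) ℝ) (hrank : M.rank = k) :
    (Mᵀ * W * M).PosDef := by
  have hinj := mulVec_inj_of_rank M hrank
  refine posDef_iff_dotProduct_mulVec.mpr ⟨?_, ?_⟩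
  · have hWH : Wᵀ = W := hW.isHermitian
    show (Mᵀ * W * M)ᴴ = _
    simp [conjTranspose_eq_transpose_of_trivial, transpose_mul, hWH, Matrix.mul_assoc]
  · intro x hx
    have hMx : M.mulVec x ≠ 0 := fun h => hx (hinj (by simpa using h))
    have h := hW.dotProduct_mulVec_pos hMx
    show (0:ℝ) < star x ⬝ᵥ (Mᵀ * W * M) *ᵥ x
    rw [star_trivial, Matrix.mul_assoc, ← mulVec_mulVec, dotProduct_mulVec,
      vecMul_transpose, ← mulVec_mulVec]
    simpa using h

/-- If `AᵀS` has full column rank and `W` is spd, then `SᵀAWAᵀS` is invertible and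
the sketch-and-project update satisfies the sketched equation. -/
theorem sketched_equation (m n k : ℕ) (A : Matrix (Fin m) (Fin n) ℝ)
    (W : Matrix (Fin n) (Fin n) ℝ) (hW : W.PosDef)
    (S : Matrix (Fin m) (Fin k) ℝ) (hrank : (Aᵀ * S).rank = k)
    (b : Fin m → ℝ) :
    IsUnit (Sᵀ * A * W * Aᵀ * S).det ∧
    ∀ r : Fin m → ℝ,
      (Sᵀ * A).mulVec ((W * Aᵀ * S * (Sᵀ * A * W * Aᵀ * S)⁻¹ * Sᵀ).mulVec r)
        = Sᵀ.mulVec r := by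
  have hN : (Sᵀ * A * W * Aᵀ * S).PosDef := by
    have := posDef_conj W hW (Aᵀ * S) hrank
    have heq : (Aᵀ * S)ᵀ * W * (Aᵀ * S) = Sᵀ * A * W * Aᵀ * S := by
      rw [transpose_mul, transpose_transpose]; simp only [Matrix.mul_assoc]
    rwa [heq] at this
  have hdet : IsUnit (Sᵀ * A * W * Aᵀ * S).det := hN.det_pos.ne'.isUnit
  refine ⟨hdet, fun r => ?_⟩
  have hM : Sᵀ * A * (W * Aᵀ * S * (Sᵀ * A * W * Aᵀ * S)⁻¹ * Sᵀ) = Sᵀ :=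
    calc Sᵀ * A * (W * Aᵀ * S * (Sᵀ * A * W * Aᵀ * S)⁻¹ * Sᵀ)
      = (Sᵀ * A * W * Aᵀ * S) * (Sᵀ * A * W * Aᵀ * S)⁻¹ * Sᵀ := by simp only [Matrix.mul_assoc]
    _ = Sᵀ := by rw [mul_nonsing_inv _ hdet, Matrix.one_mul]
  rw [mulVec_mulVec, hM]
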